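/- Let F be a field of characteristic 2 and let t, a₄, a₉, a₁₄, x, y ∈ F with a₉ ≠ 0. Suppose y² + a₉·y = t·x⁴ + t·a₄²·x² + a₁₄·x. Define y₁ = y + (a₁₄/a₉)·x + (a₄²·t/a₉ + a₁₄²/a₉³)·x² and h = t + a₄⁴·t²/a₉² + a₁₄⁴/a₉⁶, and assume y₁ ≠ 0. Define x₃ = a₉³·h·x²/y₁, y₃ = a₉⁵·h·x/y₁, X = (x₃ + a₁₄²)/a₉², and Y = (y₃ + a₁₄·x₃ + a₁₄³ + a₁₄·a₄²·a₉²·t)/a₉³. Then Y² = X³ + (a₉²·t + a₄⁴·t²)·X + a₁₄²·t. -/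

import Mathlib

/-- Computational content of Lemma 6.1 of the paper (case `a₉ ≠ 0`): the quasi-elliptic
equation `y² + a₉y = tx⁴ + ta₄²x² + a₁₄x` transforms into the Weierstrass form
`Y² = X³ + (a₉²t + a₄⁴t²)X + a₁₄²t` of its relative Jacobian. -/
theorem jacobian_weierstrass_form_of_ne_zero
    (F : Type*) [Field F] [CharP F 2]
    (t a₄ a₉ a₁₄ x y : F) (ha₉ : a₉ ≠ 0)
    (heq : y ^ 2 + a₉ * y = t * x ^ 4 + t * a₄ ^ 2 * x ^ 2 + a₁₄ * x)
    (y₁ h x₃ y₃ X Y : F)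
    (hy₁ : y₁ = y + (a₁₄ / a₉) * x + (a₄ ^ 2 * t / a₉ + a₁₄ ^ 2 / a₉ ^ 3) * x ^ 2)
    (hh : h = t + a₄ ^ 4 * t ^ 2 / a₉ ^ 2 + a₁₄ ^ 4 / a₉ ^ 6)
    (hy₁0 : y₁ ≠ 0)
    (hx₃ : x₃ = a₉ ^ 3 * h * x ^ 2 / y₁)
    (hy₃ : y₃ = a₉ ^ 5 * h * x / y₁)
    (hX : X = (x₃ + a₁₄ ^ 2) / a₉ ^ 2)
    (hY : Y = (y₃ + a₁₄ * x₃ + a₁₄ ^ 3 + a₁₄ * a₄ ^ 2 * a₉ ^ 2 * t) / a₉ ^ 3) :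
    Y ^ 2 = X ^ 3 + (a₉ ^ 2 * t + a₄ ^ 4 * t ^ 2) * X + a₁₄ ^ 2 * t := by
  have h2 : (2 : F) = 0 := CharTwo.two_eq_zero
  have hstar : y₁ ^ 2 + a₉ * y₁ = h * x ^ 4 := by
    subst hy₁ hh
    field_simp
    ring_nf
    simp only [CharTwo.two_eq_zero, mul_zero, add_zero, zero_add]
    field_simp
    linear_combination a₉ ^ 6 * heq + (a₉ ^ 6 * a₁₄ * x + a₉ ^ 6 * x ^ 2 * a₄ ^ 2 * t) * h2
  have hkey : y₃ ^ 2 = x₃ ^ 3 + a₉ ^ 6 * h * x₃ := by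
    subst hx₃ hy₃
    field_simp
    linear_combination (-(h ^ 2 * x ^ 2)) * hstar +
      (a₉ * h ^ 2 * x ^ 2 * y₁ - h ^ 3 * x ^ 6) * h2
  subst hX hY hh
  field_simp
  ring_nf
  simp only [CharTwo.two_eq_zero, mul_zero, add_zero, zero_add]
  field_simp at hkey ⊢
  linear_combination hkey + (-(x₃ * a₁₄ ^ 4) - x₃ ^ 2 * a₁₄ ^ 2) * h2
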